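/- arXiv:2205.03328 — 9 statements merged into one kernel-verified Lean document; each statement's English description precedes it below -/
import Mathlib

section
/- Let Δ be a line age function on n0 nodes (with parameters λs, λ, n). Then for every integer i with 1 ≤ i ≤ n0/2 and i + 1 ≤ n0, the single-node ages satisfy Δ_{i+1,1} ≤ Δ_{i,1}; that is, in a line network the expected version age is highest at the corner nodes and decreases towards the center. -/
/-- In a line network of `n0` gossiping nodes (source rate `lamS`, per-node update rate
`lam/n`, per-link rate `lam/2`), with `Δ j k` the stationary version age of the contiguous
set `S_{j,k} = {j, …, j+k-1}`, the expected version age is highest at the corner nodes and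
decreases towards the center: `Δ (i+1) 1 ≤ Δ i 1` for `1 ≤ i ≤ n0/2`, `i + 1 ≤ n0`. -/
theorem line_age_decreases_towards_center
    (n0 : ℕ) (lamS lam n : ℝ)
    (hn0 : 0 < n0) (hlamS : 0 < lamS) (hlam : 0 < lam) (hn : 0 < n)
    (Δ : ℕ → ℕ → ℝ)
    (hfull : Δ 1 n0 = lamS * n / ((n0 : ℝ) * lam))
    (hmid : ∀ j k : ℕ, 1 < j → 1 ≤ k → j + k ≤ n0 →
      Δ j k = (lamS + (lam / 2) * Δ j (k + 1) + (lam / 2) * Δ (j - 1) (k + 1))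
        / ((k : ℝ) * lam / n + lam))
    (hleft : ∀ k : ℕ, 1 ≤ k → k < n0 →
      Δ 1 k = (lamS + (lam / 2) * Δ 1 (k + 1)) / ((k : ℝ) * lam / n + lam / 2))
    (hright : ∀ j k : ℕ, 1 < j → 1 ≤ k → j + k = n0 + 1 →
      Δ j k = (lamS + (lam / 2) * Δ (j - 1) (k + 1)) / ((k : ℝ) * lam / n + lam / 2))
    (hmono : ∀ j k j' k' : ℕ, 1 ≤ j' → 1 ≤ k → j' ≤ j → j + k ≤ j' + k' → j' + k' ≤ n0 + 1 →
      Δ j' k' ≤ Δ j k)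
    (i : ℕ) (hi : 1 ≤ i) (hihalf : 2 * i ≤ n0) (hin0 : i + 1 ≤ n0) :
    Δ (i + 1) 1 ≤ Δ i 1 := by
  have hden1 : ∀ k : ℕ, (0:ℝ) < (k : ℝ) * lam / n + lam / 2 := by
    intro k; positivity
  have hden2 : ∀ k : ℕ, (0:ℝ) < (k : ℝ) * lam / n + lam := by
    intro k; positivity
  -- L1 : upper bound on the corner ages
  have L1 : ∀ m k : ℕ, 1 ≤ k → k + m = n0 → Δ 1 k ≤ lamS * n / ((k : ℝ) * lam) := by
    intro m
    induction m with
    | zero =>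
      intro k hk hkn
      have : k = n0 := by omega
      subst this
      rw [hfull]
    | succ m ih =>
      intro k hk hkn
      have hklt : k < n0 := by omega
      rw [hleft k hk hklt]
      have hx := ih (k + 1) (by omega) (by omega)
      set X := Δ 1 (k + 1) with hX
      have hkl : (0:ℝ) < ((k:ℝ) + 1) * lam := by positivity
      have hx2 : X ≤ lamS * n / (((k:ℝ) + 1) * lam) := by push_cast at hx; exact hx
      have hx' : X * (((k:ℝ) + 1) * lam) ≤ lamS * n := (le_div_iff₀ hkl).mp hx2
      have key : X * ((k:ℝ) * lam) ≤ lamS * n := by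
        rcases le_or_gt 0 X with h | h
        · nlinarith [mul_nonneg h hlam.le]
        · nlinarith [mul_pos hlamS hn, mul_nonneg (Nat.cast_nonneg k : (0:ℝ) ≤ k) hlam.le]
      have hkpos : (0:ℝ) < (k:ℝ) * lam := by
        have h1k : (1:ℝ) ≤ (k:ℝ) := by exact_mod_cast hk
        nlinarith
      rw [div_le_div_iff₀ (hden1 k) hkpos]
      have hfield : lamS * n * ((k:ℝ) * lam / n + lam / 2)
          = lamS * ((k:ℝ) * lam) + (lam / 2) * (lamS * n) := by
        field_simp
      rw [hfield]
      nlinarith [mul_le_mul_of_nonneg_left key (by positivity : (0:ℝ) ≤ lam / 2)]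
  -- L2 : symmetry
  have L2 : ∀ m k j j' : ℕ, 1 ≤ k → 1 ≤ j → 1 ≤ j' → k + m = n0 →
      j + j' + k = n0 + 2 → Δ j k = Δ j' k := by
    intro m
    induction m with
    | zero =>
      intro k j j' hk hj hj' hkn hs
      have : j = 1 ∧ j' = 1 := by omega
      rw [this.1, this.2]
    | succ m ih =>
      intro k j j' hk hj hj' hkn hs
      have hklt : k < n0 := by omega
      rcases eq_or_lt_of_le hj with hj1 | hj2
      · -- j = 1
        rcases eq_or_lt_of_le hj' with hj'1 | hj'2
        · omega
        · -- j = 1, j' ≥ 2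
          rw [← hj1]
          rw [hleft k hk hklt, hright j' k hj'2 hk (by omega)]
          have hrec := ih (k+1) 1 (j' - 1) (by omega) (by omega) (by omega) (by omega)
            (by omega)
          rw [hrec]
      · rcases eq_or_lt_of_le hj' with hj'1 | hj'2
        · -- j ≥ 2, j' = 1
          rw [← hj'1]
          rw [hleft k hk hklt, hright j k hj2 hk (by omega)]
          have hrec := ih (k+1) 1 (j - 1) (by omega) (by omega) (by omega) (by omega)
            (by omega)
          rw [hrec]
        · -- j, j' ≥ 2
          rw [hmid j k hj2 hk (by omega), hmid j' k hj'2 hk (by omega)]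
          have h1 := ih (k+1) j (j' - 1) (by omega) (by omega) (by omega) (by omega)
            (by omega)
          have h2 := ih (k+1) (j-1) j' (by omega) (by omega) (by omega) (by omega)
            (by omega)
          rw [h1, h2]
          ring_nf
  -- L3 : monotonicity towards the center
  have L3 : ∀ m k j : ℕ, 1 ≤ k → 1 ≤ j → k + m = n0 → 2 * j + k ≤ n0 + 1 →
      Δ (j + 1) k ≤ Δ j k := by
    intro m
    induction m with
    | zero =>
      intro k j hk hj hkn hjk
      omega
    | succ m ih =>
      intro k j hk hj hkn hjk
      have hklt : k < n0 := by omega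
      rcases eq_or_lt_of_le hjk with heq | hlt
      · -- boundary: symmetry gives equality
        have := L2 (m+1) k (j+1) j hk (by omega) hj hkn (by omega)
        exact le_of_eq this
      · -- 2*j + k ≤ n0
        rcases eq_or_lt_of_le hj with hj1 | hj2
        · -- j = 1
          rw [← hj1]
          rw [hleft k hk hklt, hmid 2 k (by norm_num) hk (by omega)]
          norm_num
          set X := Δ 1 (k + 1) with hX
          set Y := Δ 2 (k + 1) with hY
          have hy : Y ≤ X := by
            have := ih (k+1) 1 (by omega) (by omega) (by omega) (by omega)
            simpa using this
          have hx : X ≤ lamS * n / (((k:ℝ) + 1) * lam) := by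
            have := L1 m (k+1) (by omega) (by omega)
            push_cast at this; exact this
          have hkl : (0:ℝ) < ((k:ℝ) + 1) * lam := by positivity
          have hx' : X * (((k:ℝ) + 1) * lam) ≤ lamS * n := (le_div_iff₀ hkl).mp hx
          have key : X * ((k:ℝ) * lam) ≤ lamS * n := by
            rcases le_or_gt 0 X with h | h
            · nlinarith [mul_nonneg h hlam.le]
            · nlinarith [mul_pos hlamS hn,
                mul_nonneg (Nat.cast_nonneg k : (0:ℝ) ≤ k) hlam.le]
          have ha : (0:ℝ) ≤ (k:ℝ) * lam / n := by positivity
          have hkey' : X * ((k:ℝ) * lam / n) ≤ lamS := by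
            rw [mul_div_assoc'] at *
            rw [div_le_iff₀ hn]
            nlinarith [key]
          rw [div_le_div_iff₀ (hden2 k) (hden1 k)]
          nlinarith [mul_le_mul_of_nonneg_left hkey' (by positivity : (0:ℝ) ≤ lam / 2),
            mul_le_mul_of_nonneg_left (mul_le_mul_of_nonneg_right hy ha)
              (by positivity : (0:ℝ) ≤ lam / 2),
            mul_le_mul_of_nonneg_left hy (by positivity : (0:ℝ) ≤ lam * lam / 4)]
        · -- j ≥ 2
          rw [hmid (j+1) k (by omega) hk (by omega), hmid j k hj2 hk (by omega)]
          have h1 := ih (k+1) j (by omega) (by omega) (by omega) (by omega)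
          have h2' := ih (k+1) (j-1) (by omega) (by omega) (by omega) (by omega)
          have hj1 : j - 1 + 1 = j := by omega
          rw [hj1] at h2'
          have hchain : Δ (j + 1) (k + 1) ≤ Δ (j - 1) (k + 1) := h1.trans h2'
          have hjj : j + 1 - 1 = j := by omega
          rw [hjj]
          have hnum : lamS + lam / 2 * Δ (j+1) (k + 1) + lam / 2 * Δ j (k + 1)
              ≤ lamS + lam / 2 * Δ j (k + 1) + lam / 2 * Δ (j - 1) (k + 1) := by
            have := mul_le_mul_of_nonneg_left hchain (by positivity : (0:ℝ) ≤ lam / 2)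
            linarith
          exact div_le_div_of_nonneg_right hnum (hden2 k).le |>.trans_eq rfl
  exact L3 (n0 - 1) 1 i (le_refl 1) hi (by omega) (by omega)
end

section
/- Let Δ be a line age function on n0 nodes and Δ^r a ring age function on n0 nodes, both with the same parameters λs, λ, n. Then for every valid pair (j,k), one has Δ^r_k ≤ Δ_{j,k}; in particular, the single-node version age in the ring lower-bounds the version age of every node of the line network: Δ^r_1 ≤ Δ_{i,1} for all 1 ≤ i ≤ n0. -/
/-- Let `Δ` be a line age function on `n0` nodes and `Δr` a ring age function on `n0` nodes,
both with the same parameters `lamS, lam, n`. Then for every valid pair `(j,k)` one has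
`Δr k ≤ Δ j k`; in particular the single-node version age in the ring lower-bounds the
version age of every node of the line network: `Δr 1 ≤ Δ i 1` for all `1 ≤ i ≤ n0`. -/
theorem ring_age_lower_bounds_line_age
    (n0 : ℕ) (lamS lam n : ℝ)
    (hn0 : 0 < n0) (hlamS : 0 < lamS) (hlam : 0 < lam) (hn : 0 < n)
    (Δ : ℕ → ℕ → ℝ)
    (hfull : Δ 1 n0 = lamS * n / ((n0 : ℝ) * lam))
    (hmid : ∀ j k : ℕ, 1 < j → 1 ≤ k → j + k ≤ n0 →
      Δ j k = (lamS + (lam / 2) * Δ j (k + 1) + (lam / 2) * Δ (j - 1) (k + 1))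
        / ((k : ℝ) * lam / n + lam))
    (hleft : ∀ k : ℕ, 1 ≤ k → k < n0 →
      Δ 1 k = (lamS + (lam / 2) * Δ 1 (k + 1)) / ((k : ℝ) * lam / n + lam / 2))
    (hright : ∀ j k : ℕ, 1 < j → 1 ≤ k → j + k = n0 + 1 →
      Δ j k = (lamS + (lam / 2) * Δ (j - 1) (k + 1)) / ((k : ℝ) * lam / n + lam / 2))
    (hmono : ∀ j k j' k' : ℕ, 1 ≤ j' → 1 ≤ k → j' ≤ j → j + k ≤ j' + k' → j' + k' ≤ n0 + 1 →
      Δ j' k' ≤ Δ j k)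
    (Δr : ℕ → ℝ)
    (hrfull : Δr n0 = lamS * n / ((n0 : ℝ) * lam))
    (hrrec : ∀ k : ℕ, 1 ≤ k → k + 1 ≤ n0 →
      Δr k = (lamS + lam * Δr (k + 1)) / ((k : ℝ) * lam / n + lam))
    (hrmono : ∀ k : ℕ, 1 ≤ k → k + 1 ≤ n0 → Δr (k + 1) ≤ Δr k) :
    (∀ j k : ℕ, 1 ≤ j → 1 ≤ k → j + k ≤ n0 + 1 → Δr k ≤ Δ j k) ∧
    (∀ i : ℕ, 1 ≤ i → i ≤ n0 → Δr 1 ≤ Δ i 1) := by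
  have key : ∀ k : ℕ, 1 ≤ k → k + 1 ≤ n0 →
      Δr k * ((k : ℝ) * lam / n + lam / 2) ≤ lamS + (lam / 2) * Δr (k + 1) := by
    intro k hk hkn
    have hrm := hrmono k hk hkn
    have hd : (0:ℝ) < (k : ℝ) * lam / n + lam := by positivity
    have heq : Δr k * ((k : ℝ) * lam / n + lam) = lamS + lam * Δr (k + 1) := by
      rw [hrrec k hk hkn, div_mul_cancel₀ _ hd.ne']
    nlinarith [mul_nonneg hlam.le (sub_nonneg.2 hrm)]
  have main : ∀ m : ℕ, ∀ j k : ℕ, 1 ≤ j → 1 ≤ k → j + k ≤ n0 + 1 → n0 ≤ k + m →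
      Δr k ≤ Δ j k := by
    intro m
    induction m with
    | zero =>
      intro j k hj hk hjk hm
      have hj1 : j = 1 := by omega
      have hkn : k = n0 := by omega
      subst hj1; subst hkn
      rw [hfull, hrfull]
    | succ m ih =>
      intro j k hj hk hjk hm
      by_cases hcase : n0 ≤ k + m
      · exact ih j k hj hk hjk hcase
      · have hkn : k + 1 ≤ n0 := by omega
        have hd2 : (0:ℝ) < (k : ℝ) * lam / n + lam / 2 := by positivity
        have hd : (0:ℝ) < (k : ℝ) * lam / n + lam := by positivity
        have hkey := key k hk hkn
        rcases Nat.lt_or_ge 1 j with hj2 | hj1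
        · rcases Nat.lt_or_ge (j + k) (n0 + 1) with hmidc | hedge
          · rw [hmid j k hj2 hk (by omega), le_div_iff₀ hd]
            have h1 := ih j (k + 1) hj (by omega) (by omega) (by omega)
            have h2 := ih (j - 1) (k + 1) (by omega) (by omega) (by omega) (by omega)
            have heq : Δr k * ((k : ℝ) * lam / n + lam) = lamS + lam * Δr (k + 1) := by
              rw [hrrec k hk hkn, div_mul_cancel₀ _ hd.ne']
            nlinarith [hlam.le]
          · have hje : j + k = n0 + 1 := by omega
            rw [hright j k hj2 hk hje, le_div_iff₀ hd2]
            have h2 := ih (j - 1) (k + 1) (by omega) (by omega) (by omega) (by omega)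
            nlinarith [hlam.le]
        · have hj1' : j = 1 := by omega
          subst hj1'
          rw [hleft k hk (by omega), le_div_iff₀ hd2]
          have h1 := ih 1 (k + 1) (by norm_num) (by omega) (by omega) (by omega)
          nlinarith [hlam.le]
  constructor
  · intro j k hj hk hjk
    exact main n0 j k hj hk hjk (by omega)
  · intro i hi hin
    exact main n0 i 1 hi le_rfl (by omega) (by omega)
end

section
/- Let Δ^r : {1,...,n0} → ℝ satisfy the ring recursion Δ^r_{n0} = λs·n/(n0·λ) and Δ^r_k = (λs + λ·Δ^r_{k+1})/(k·λ/n + λ) for 1 ≤ k ≤ n0−1. Then the single-node version age admits the closed form Δ^r_1 = (λs/λ)·[ Σ_{j=1}^{n0−1} Π_{k=1}^{j} 1/(k/n + 1) + (n/n0)·Π_{k=1}^{n0−1} 1/(k/n + 1) ]. -/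
open Finset

/-- Closed form for the single-node version age in a ring of `n0` gossiping nodes: if
`Δr : {1,…,n0} → ℝ` satisfies the ring recursion `Δr n0 = lamS·n/(n0·lam)` and
`Δr k = (lamS + lam·Δr (k+1)) / (k·lam/n + lam)` for `1 ≤ k ≤ n0 - 1`, then
`Δr 1 = (lamS/lam)·[ Σ_{j=1}^{n0-1} Π_{k=1}^{j} 1/(k/n+1) + (n/n0)·Π_{k=1}^{n0-1} 1/(k/n+1) ]`. -/
theorem ring_age_closed_form
    (n0 : ℕ) (lamS lam n : ℝ)
    (hn0 : 0 < n0) (hlamS : 0 < lamS) (hlam : 0 < lam) (hn : 0 < n)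
    (Δr : ℕ → ℝ)
    (hrfull : Δr n0 = lamS * n / ((n0 : ℝ) * lam))
    (hrrec : ∀ k : ℕ, 1 ≤ k → k + 1 ≤ n0 →
      Δr k = (lamS + lam * Δr (k + 1)) / ((k : ℝ) * lam / n + lam)) :
    Δr 1 = (lamS / lam) *
      ((∑ j ∈ Finset.Icc 1 (n0 - 1), ∏ k ∈ Finset.Icc 1 j, 1 / ((k : ℝ) / n + 1))
        + (n / (n0 : ℝ)) * ∏ k ∈ Finset.Icc 1 (n0 - 1), 1 / ((k : ℝ) / n + 1)) := by
  have hn' : (n : ℝ) ≠ 0 := ne_of_gt hn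
  have hlam' : (lam : ℝ) ≠ 0 := ne_of_gt hlam
  have hn0' : ((n0 : ℕ) : ℝ) ≠ 0 := Nat.cast_ne_zero.mpr hn0.ne'
  have key : ∀ t : ℕ, t < n0 →
      Δr (n0 - t) = (lamS / lam) *
        ((∑ j ∈ Finset.Icc (n0 - t) (n0 - 1),
            ∏ k ∈ Finset.Icc (n0 - t) j, 1 / ((k : ℝ) / n + 1))
          + (n / (n0 : ℝ)) * ∏ k ∈ Finset.Icc (n0 - t) (n0 - 1), 1 / ((k : ℝ) / n + 1)) := by
    intro t
    induction t with
    | zero =>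
      intro _
      simp only [Nat.sub_zero]
      rw [Finset.Icc_eq_empty (by omega), Finset.sum_empty, Finset.prod_empty, hrfull]
      field_simp
      ring
    | succ t ih =>
      intro ht
      have hm1 : 1 ≤ n0 - (t + 1) := by omega
      set m := n0 - (t + 1) with hm
      have hmt : m + 1 = n0 - t := by omega
      have hrec := hrrec m hm1 (by omega)
      have ihm := ih (by omega)
      rw [← hmt] at ihm
      rw [hrec, ihm]
      have hI : Finset.Icc m (n0 - 1) = insert m (Finset.Icc (m + 1) (n0 - 1)) := by
        rw [Finset.Icc_add_one_left_eq_Ioc, Finset.Ioc_insert_left (by omega)]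
      have hnotmem : m ∉ Finset.Icc (m + 1) (n0 - 1) := by
        simp [Finset.mem_Icc]
      have hP : ∏ k ∈ Finset.Icc m (n0 - 1), 1 / ((k : ℝ) / n + 1)
          = (1 / ((m : ℝ) / n + 1)) * ∏ k ∈ Finset.Icc (m + 1) (n0 - 1), 1 / ((k : ℝ) / n + 1) := by
        rw [hI, Finset.prod_insert hnotmem]
      have hS : ∑ j ∈ Finset.Icc m (n0 - 1), ∏ k ∈ Finset.Icc m j, 1 / ((k : ℝ) / n + 1)
          = (1 / ((m : ℝ) / n + 1)) *
            (1 + ∑ j ∈ Finset.Icc (m + 1) (n0 - 1), ∏ k ∈ Finset.Icc (m + 1) j, 1 / ((k : ℝ) / n + 1)) := by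
        have hterm : ∀ j ∈ Finset.Icc (m + 1) (n0 - 1),
            ∏ k ∈ Finset.Icc m j, 1 / ((k : ℝ) / n + 1)
              = (1 / ((m : ℝ) / n + 1)) * ∏ k ∈ Finset.Icc (m + 1) j, 1 / ((k : ℝ) / n + 1) := by
          intro j hj
          have hj := Finset.mem_Icc.mp hj
          have hIj : Finset.Icc m j = insert m (Finset.Icc (m + 1) j) := by
            rw [Finset.Icc_add_one_left_eq_Ioc, Finset.Ioc_insert_left (by omega)]
          rw [hIj, Finset.prod_insert (by simp [Finset.mem_Icc])]
        rw [hI, Finset.sum_insert hnotmem, Finset.Icc_self, Finset.prod_singleton,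
          Finset.sum_congr rfl hterm, ← Finset.mul_sum]
        ring
      rw [hS, hP]
      have hmn : (m : ℝ) / n + 1 ≠ 0 := by positivity
      have hden : (m : ℝ) * lam / n + lam ≠ 0 := by
        have : (m : ℝ) * lam / n + lam = lam * ((m : ℝ) / n + 1) := by field_simp
        rw [this]; exact mul_ne_zero hlam' hmn
      field_simp
      ring
  have hfin := key (n0 - 1) (by omega)
  rw [Nat.sub_sub_self hn0] at hfin
  exact hfin
end

section
/- Let D : {1,...,n0} → ℝ satisfy the corner-set recursion D_{n0} = λs·n/(n0·λ) and D_k = (λs + (λ/2)·D_{k+1})/(k·λ/n + λ/2) for 1 ≤ k ≤ n0−1. Then D_1 = (2λs/λ)·[ Σ_{j=1}^{n0−1} Π_{k=1}^{j} 1/(2k/n + 1) + (n/(2n0))·Π_{k=1}^{n0−1} 1/(2k/n + 1) ]. -/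
open Finset

/-- Closed form for the corner-node version age in a line network of `n0` gossiping nodes: if
`D : {1,…,n0} → ℝ` satisfies the corner-set recursion `D n0 = lamS·n/(n0·lam)` and
`D k = (lamS + (lam/2)·D (k+1)) / (k·lam/n + lam/2)` for `1 ≤ k ≤ n0 - 1`, then
`D 1 = (2·lamS/lam)·[ Σ_{j=1}^{n0-1} Π_{k=1}^{j} 1/(2k/n+1) + (n/(2n0))·Π_{k=1}^{n0-1} 1/(2k/n+1) ]`. -/
theorem line_corner_age_closed_form
    (n0 : ℕ) (lamS lam n : ℝ)
    (hn0 : 0 < n0) (hlamS : 0 < lamS) (hlam : 0 < lam) (hn : 0 < n)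
    (D : ℕ → ℝ)
    (hfull : D n0 = lamS * n / ((n0 : ℝ) * lam))
    (hrec : ∀ k : ℕ, 1 ≤ k → k + 1 ≤ n0 →
      D k = (lamS + (lam / 2) * D (k + 1)) / ((k : ℝ) * lam / n + lam / 2)) :
    D 1 = (2 * lamS / lam) *
      ((∑ j ∈ Finset.Icc 1 (n0 - 1), ∏ k ∈ Finset.Icc 1 j, 1 / (2 * (k : ℝ) / n + 1))
        + (n / (2 * (n0 : ℝ))) * ∏ k ∈ Finset.Icc 1 (n0 - 1), 1 / (2 * (k : ℝ) / n + 1)) := by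
  have hlam' : lam ≠ 0 := ne_of_gt hlam
  have hn' : n ≠ 0 := ne_of_gt hn
  have hn0' : (n0 : ℝ) ≠ 0 := Nat.cast_ne_zero.mpr (by omega)
  have key : ∀ d m : ℕ, m + d = n0 → 1 ≤ m →
      D m = (2 * lamS / lam) *
        ((∑ j ∈ Finset.Icc m (n0 - 1), ∏ k ∈ Finset.Icc m j, 1 / (2 * (k : ℝ) / n + 1))
          + (n / (2 * (n0 : ℝ))) * ∏ k ∈ Finset.Icc m (n0 - 1), 1 / (2 * (k : ℝ) / n + 1)) := by
    intro d
    induction d with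
    | zero =>
      intro m hm _
      have hmn0 : m = n0 := by omega
      subst hmn0
      rw [Finset.Icc_eq_empty (by omega), Finset.sum_empty, Finset.prod_empty, hfull]
      field_simp
      ring
    | succ d ih =>
      intro m hm hm1
      have hle : m + 1 ≤ n0 := by omega
      have hD := hrec m hm1 hle
      have hnext := ih (m + 1) (by omega) (by omega)
      have ha : (0:ℝ) < 2 * (m : ℝ) / n + 1 := by positivity
      have ha' : (2 * (m : ℝ) / n + 1) ≠ 0 := ne_of_gt ha
      have hsplitP : ∀ j, m ≤ j →
          (∏ k ∈ Finset.Icc m j, 1 / (2 * (k : ℝ) / n + 1))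
            = (1 / (2 * (m : ℝ) / n + 1)) *
              ∏ k ∈ Finset.Icc (m + 1) j, 1 / (2 * (k : ℝ) / n + 1) := by
        intro j hj
        rw [← Finset.Ico_add_one_right_eq_Icc, ← Finset.Ico_add_one_right_eq_Icc]
        exact Finset.prod_eq_prod_Ico_succ_bot (by omega) _
      have hmle : m ≤ n0 - 1 := by omega
      have hsplitS : (∑ j ∈ Finset.Icc m (n0 - 1), ∏ k ∈ Finset.Icc m j, 1 / (2 * (k : ℝ) / n + 1))
          = (1 / (2 * (m : ℝ) / n + 1)) *
            (1 + ∑ j ∈ Finset.Icc (m + 1) (n0 - 1),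
              ∏ k ∈ Finset.Icc (m + 1) j, 1 / (2 * (k : ℝ) / n + 1)) := by
        rw [← Finset.Ico_add_one_right_eq_Icc m (n0 - 1),
          Finset.sum_eq_sum_Ico_succ_bot (by omega : m < n0 - 1 + 1),
          Finset.Ico_add_one_right_eq_Icc, Finset.Icc_self, Finset.prod_singleton]
        rw [Finset.sum_congr rfl
          (fun j hj => hsplitP j (by have := (Finset.mem_Icc.mp hj).1; omega))]
        rw [← Finset.mul_sum, mul_add, mul_one]
      rw [hD, hnext, hsplitS, hsplitP (n0 - 1) hmle]
      generalize (∑ j ∈ Finset.Icc (m + 1) (n0 - 1),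
        ∏ k ∈ Finset.Icc (m + 1) j, 1 / (2 * (k : ℝ) / n + 1)) = S
      generalize (∏ k ∈ Finset.Icc (m + 1) (n0 - 1), 1 / (2 * (k : ℝ) / n + 1)) = P
      have hden : ((m : ℝ) * lam / n + lam / 2) ≠ 0 := by positivity
      field_simp
      ring
  have := key (n0 - 1) 1 (by omega) le_rfl
  exact this
end

section
/- For every positive integer n0 and all positive reals m, n with m ≤ n, one has Σ_{j=1}^{n0−1} Π_{k=1}^{j} 1/(k/m + 1) + (m/n0)·Π_{k=1}^{n0−1} 1/(k/m + 1) ≤ Σ_{j=1}^{n0−1} Π_{k=1}^{j} 1/(k/n + 1) + (n/n0)·Π_{k=1}^{n0−1} 1/(k/n + 1). In particular, taking m = n/2, the closed-form corner age of the line network is at most twice the closed-form age of the ring network of the same size: (2λs/λ)·[ Σ_{j=1}^{n0−1} Π_{k=1}^{j} 1/(2k/n + 1) + (n/(2n0))·Π_{k=1}^{n0−1} 1/(2k/n + 1) ] ≤ 2·(λs/λ)·[ Σ_{j=1}^{n0−1} Π_{k=1}^{j} 1/(k/n + 1) + (n/n0)·Π_{k=1}^{n0−1} 1/(k/n + 1)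 ] for any λs, λ > 0. -/
open Finset

lemma ring_age_mono (n0 : ℕ) (m n : ℝ) (hn0 : 0 < n0) (hm : 0 < m) (hn : 0 < n)
    (hmn : m ≤ n) :
    ((∑ j ∈ Finset.Icc 1 (n0 - 1), ∏ k ∈ Finset.Icc 1 j, 1 / ((k : ℝ) / m + 1))
        + (m / (n0 : ℝ)) * ∏ k ∈ Finset.Icc 1 (n0 - 1), 1 / ((k : ℝ) / m + 1)
      ≤ (∑ j ∈ Finset.Icc 1 (n0 - 1), ∏ k ∈ Finset.Icc 1 j, 1 / ((k : ℝ) / n + 1))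
        + (n / (n0 : ℝ)) * ∏ k ∈ Finset.Icc 1 (n0 - 1), 1 / ((k : ℝ) / n + 1)) := by
  have hterm : ∀ k : ℕ, 1 ≤ k → (1 : ℝ) / ((k : ℝ) / m + 1) ≤ 1 / ((k : ℝ) / n + 1) := by
    intro k hk
    have hk0 : (0 : ℝ) ≤ (k : ℝ) := Nat.cast_nonneg k
    have h1 : (0 : ℝ) < (k : ℝ) / n + 1 := by positivity
    have h2 : (k : ℝ) / n + 1 ≤ (k : ℝ) / m + 1 := by
      have := div_le_div_of_nonneg_left hk0 hm hmn
      linarith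
    exact one_div_le_one_div_of_le h1 h2
  have hprod : ∀ j : ℕ,
      (∏ k ∈ Finset.Icc 1 j, 1 / ((k : ℝ) / m + 1))
        ≤ ∏ k ∈ Finset.Icc 1 j, 1 / ((k : ℝ) / n + 1) := by
    intro j
    apply Finset.prod_le_prod
    · intro k hk; positivity
    · intro k hk; exact hterm k (Finset.mem_Icc.mp hk).1
  have hprodpos : ∀ j : ℕ, (0 : ℝ) ≤ ∏ k ∈ Finset.Icc 1 j, 1 / ((k : ℝ) / m + 1) := by
    intro j; apply Finset.prod_nonneg; intro k hk; positivity
  have hsum : (∑ j ∈ Finset.Icc 1 (n0 - 1), ∏ k ∈ Finset.Icc 1 j, 1 / ((k : ℝ) / m + 1))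
      ≤ ∑ j ∈ Finset.Icc 1 (n0 - 1), ∏ k ∈ Finset.Icc 1 j, 1 / ((k : ℝ) / n + 1) :=
    Finset.sum_le_sum fun j _ => hprod j
  have hmul : (m / (n0 : ℝ)) * (∏ k ∈ Finset.Icc 1 (n0 - 1), 1 / ((k : ℝ) / m + 1))
      ≤ (n / (n0 : ℝ)) * ∏ k ∈ Finset.Icc 1 (n0 - 1), 1 / ((k : ℝ) / n + 1) := by
    have hn0' : (0 : ℝ) < (n0 : ℝ) := Nat.cast_pos.mpr hn0
    apply mul_le_mul
    · exact div_le_div_of_nonneg_right hmn hn0'.le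
    · exact hprod _
    · exact hprodpos _
    · positivity
  linarith

/-- For every positive integer `n0` and positive reals `m ≤ n`, the closed-form ring-age
expression `A(m) = Σ_{j=1}^{n0-1} Π_{k=1}^{j} 1/(k/m+1) + (m/n0)·Π_{k=1}^{n0-1} 1/(k/m+1)` is
monotone: `A(m) ≤ A(n)`. In particular (taking `m = n/2`), the closed-form corner age of the
line network is at most twice the closed-form age of the ring network of the same size. -/
theorem ring_age_expression_monotone
    (n0 : ℕ) (m n lamS lam : ℝ)
    (hn0 : 0 < n0) (hm : 0 < m) (hn : 0 < n) (hmn : m ≤ n)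
    (hlamS : 0 < lamS) (hlam : 0 < lam) :
    ((∑ j ∈ Finset.Icc 1 (n0 - 1), ∏ k ∈ Finset.Icc 1 j, 1 / ((k : ℝ) / m + 1))
        + (m / (n0 : ℝ)) * ∏ k ∈ Finset.Icc 1 (n0 - 1), 1 / ((k : ℝ) / m + 1)
      ≤ (∑ j ∈ Finset.Icc 1 (n0 - 1), ∏ k ∈ Finset.Icc 1 j, 1 / ((k : ℝ) / n + 1))
        + (n / (n0 : ℝ)) * ∏ k ∈ Finset.Icc 1 (n0 - 1), 1 / ((k : ℝ) / n + 1)) ∧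
    ((2 * lamS / lam) *
        ((∑ j ∈ Finset.Icc 1 (n0 - 1), ∏ k ∈ Finset.Icc 1 j, 1 / (2 * (k : ℝ) / n + 1))
          + (n / (2 * (n0 : ℝ))) * ∏ k ∈ Finset.Icc 1 (n0 - 1), 1 / (2 * (k : ℝ) / n + 1))
      ≤ 2 * (lamS / lam) *
        ((∑ j ∈ Finset.Icc 1 (n0 - 1), ∏ k ∈ Finset.Icc 1 j, 1 / ((k : ℝ) / n + 1))
          + (n / (n0 : ℝ)) * ∏ k ∈ Finset.Icc 1 (n0 - 1), 1 / ((k : ℝ) / n + 1))) := by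
  refine ⟨ring_age_mono n0 m n hn0 hm hn hmn, ?_⟩
  have h2 : (0 : ℝ) < n / 2 := by linarith
  have key := ring_age_mono n0 (n / 2) n hn0 h2 hn (by linarith)
  have hrw : ∀ k : ℕ, (2 * (k : ℝ) / n + 1) = ((k : ℝ) / (n / 2) + 1) := by
    intro k; field_simp
  simp only [hrw] at *
  have hrw2 : n / (2 * (n0 : ℝ)) = (n / 2) / (n0 : ℝ) := by ring
  rw [hrw2]
  have hc : (0 : ℝ) ≤ 2 * lamS / lam := by positivity
  have : 2 * lamS / lam = 2 * (lamS / lam) := by ring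
  rw [this]
  exact mul_le_mul_of_nonneg_left key (by positivity)
end

section
/- Let Δ be a line age function on n0 nodes and Δ^r a ring age function on n0 nodes, both with the same parameters λs, λ, n. Then for every node i with 1 ≤ i ≤ n0, the version ages are sandwiched as Δ^r_1 ≤ Δ_{i,1} ≤ 2·Δ^r_1. -/
/-- Algebra for the boundary cases of the line recursion. -/
lemma line_ring_boundary_aux (a lamS lam X Y : ℝ)
    (ha : 0 < a) (hlam : 0 < lam) (hlamS : 0 < lamS) (hY : 0 < Y)
    (hYa : Y * a ≤ lamS) (hXl : Y ≤ X) (hXu : X ≤ 2 * Y) :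
    (lamS + lam * Y) / (a + lam) ≤ (lamS + (lam / 2) * X) / (a + lam / 2) ∧
    (lamS + (lam / 2) * X) / (a + lam / 2) ≤ 2 * ((lamS + lam * Y) / (a + lam)) := by
  have h1 : (0:ℝ) < a + lam := by linarith
  have h2 : (0:ℝ) < a + lam / 2 := by linarith
  constructor
  · rw [div_le_div_iff₀ h1 h2]
    nlinarith [mul_le_mul_of_nonneg_left hXl (le_of_lt hlam),
      mul_le_mul_of_nonneg_left hXl (le_of_lt ha)]
  · rw [← mul_div_assoc, div_le_div_iff₀ h2 h1]
    have hx : lam / 2 * X ≤ lam * Y := by nlinarith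
    nlinarith [mul_le_mul_of_nonneg_right hx (le_of_lt h1),
      mul_pos (show (0:ℝ) < lamS + lam * Y by nlinarith) ha]

/-- Let `Δ` be a line age function on `n0` nodes and `Δr` a ring age function on `n0` nodes,
both with the same parameters `lamS, lam, n`. Then for every node `i` with `1 ≤ i ≤ n0`, the
version ages are sandwiched as `Δr 1 ≤ Δ i 1 ≤ 2 * Δr 1`. -/
theorem line_age_sandwiched_by_ring_age
    (n0 : ℕ) (lamS lam n : ℝ)
    (hn0 : 0 < n0) (hlamS : 0 < lamS) (hlam : 0 < lam) (hn : 0 < n)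
    (Δ : ℕ → ℕ → ℝ)
    (hfull : Δ 1 n0 = lamS * n / ((n0 : ℝ) * lam))
    (hmid : ∀ j k : ℕ, 1 < j → 1 ≤ k → j + k ≤ n0 →
      Δ j k = (lamS + (lam / 2) * Δ j (k + 1) + (lam / 2) * Δ (j - 1) (k + 1))
        / ((k : ℝ) * lam / n + lam))
    (hleft : ∀ k : ℕ, 1 ≤ k → k < n0 →
      Δ 1 k = (lamS + (lam / 2) * Δ 1 (k + 1)) / ((k : ℝ) * lam / n + lam / 2))
    (hright : ∀ j k : ℕ, 1 < j → 1 ≤ k → j + k = n0 + 1 →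
      Δ j k = (lamS + (lam / 2) * Δ (j - 1) (k + 1)) / ((k : ℝ) * lam / n + lam / 2))
    (hmono : ∀ j k j' k' : ℕ, 1 ≤ j' → 1 ≤ k → j' ≤ j → j + k ≤ j' + k' → j' + k' ≤ n0 + 1 →
      Δ j' k' ≤ Δ j k)
    (Δr : ℕ → ℝ)
    (hrfull : Δr n0 = lamS * n / ((n0 : ℝ) * lam))
    (hrrec : ∀ k : ℕ, 1 ≤ k → k + 1 ≤ n0 →
      Δr k = (lamS + lam * Δr (k + 1)) / ((k : ℝ) * lam / n + lam))
    (hrmono : ∀ k : ℕ, 1 ≤ k → k + 1 ≤ n0 → Δr (k + 1) ≤ Δr k)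
    (i : ℕ) (hi : 1 ≤ i) (hin0 : i ≤ n0) :
    Δr 1 ≤ Δ i 1 ∧ Δ i 1 ≤ 2 * Δr 1 := by
  have hn0R : (0:ℝ) < (n0 : ℝ) := by exact_mod_cast hn0
  -- positivity of the ring denominator
  have hden : ∀ k : ℕ, 1 ≤ k → (0:ℝ) < (k : ℝ) * lam / n + lam := by
    intro k hk
    have : (1:ℝ) ≤ (k:ℝ) := by exact_mod_cast hk
    positivity
  have hden2 : ∀ k : ℕ, 1 ≤ k → (0:ℝ) < (k : ℝ) * lam / n := by
    intro k hk
    have : (1:ℝ) ≤ (k:ℝ) := by exact_mod_cast hk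
    positivity
  -- positivity of Δr
  have hrpos : ∀ d k : ℕ, 1 ≤ k → k ≤ n0 → n0 ≤ k + d → 0 < Δr k := by
    intro d
    induction d with
    | zero =>
      intro k hk hkn hnk
      have : k = n0 := by omega
      subst this
      rw [hrfull]; positivity
    | succ d ih =>
      intro k hk hkn hnk
      by_cases hk1 : k = n0
      · subst hk1; rw [hrfull]; positivity
      · have hk1' : k + 1 ≤ n0 := by omega
        have hY := ih (k + 1) (by omega) hk1' (by omega)
        rw [hrrec k hk hk1']
        have := hden k hk
        positivity
  have hrposK : ∀ k : ℕ, 1 ≤ k → k ≤ n0 → 0 < Δr k := fun k hk hkn =>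
    hrpos n0 k hk hkn (by omega)
  -- bound: Δr (k+1) * (k λ / n) ≤ lamS
  have hrbound : ∀ k : ℕ, 1 ≤ k → k + 1 ≤ n0 →
      Δr (k + 1) * ((k : ℝ) * lam / n) ≤ lamS := by
    intro k hk hk1
    have hd := hden k hk
    have heq : Δr k * ((k : ℝ) * lam / n + lam) = lamS + lam * Δr (k + 1) := by
      rw [hrrec k hk hk1, div_mul_cancel₀ _ (ne_of_gt hd)]
    have hm := hrmono k hk hk1
    have hd2 := hden2 k hk
    nlinarith [mul_le_mul_of_nonneg_right hm (le_of_lt hd)]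
  -- main downward induction
  have key : ∀ d k j : ℕ, 1 ≤ k → 1 ≤ j → j + k ≤ n0 + 1 → n0 ≤ k + d →
      Δr k ≤ Δ j k ∧ Δ j k ≤ 2 * Δr k := by
    intro d
    induction d with
    | zero =>
      intro k j hk hj hjk hnk
      have hk1 : k = n0 := by omega
      have hj1 : j = 1 := by omega
      subst hj1
      rw [hk1]
      have heq : Δ 1 n0 = Δr n0 := by rw [hfull, hrfull]
      have hpos := hrposK n0 (by omega) le_rfl
      constructor
      · rw [heq]
      · rw [heq]; linarith
    | succ d ih =>
      intro k j hk hj hjk hnk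
      by_cases hkn : n0 ≤ k
      · exact ih k j hk hj hjk (by omega)
      · have hk1 : k + 1 ≤ n0 := by omega
        have hd2 := hden2 k hk
        have hYpos := hrposK (k + 1) (by omega) hk1
        have hYa := hrbound k hk hk1
        have hYa' : Δr (k + 1) * ((k : ℝ) * lam / n) ≤ lamS := hYa
        have hrk : Δr k = (lamS + lam * Δr (k + 1)) / ((k : ℝ) * lam / n + lam) :=
          hrrec k hk hk1
        by_cases hj1 : j = 1
        · subst hj1
          have hIH := ih (k + 1) 1 (by omega) (by omega) (by omega) (by omega)
          have hX := line_ring_boundary_aux ((k : ℝ) * lam / n) lamS lam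
            (Δ 1 (k + 1)) (Δr (k + 1)) hd2 hlam hlamS hYpos hYa' hIH.1 hIH.2
          rw [hleft k hk (by omega), hrk]
          exact hX
        · have hj2 : 1 < j := by omega
          by_cases hjk1 : j + k = n0 + 1
          · have hIH := ih (k + 1) (j - 1) (by omega) (by omega) (by omega) (by omega)
            have hX := line_ring_boundary_aux ((k : ℝ) * lam / n) lamS lam
              (Δ (j - 1) (k + 1)) (Δr (k + 1)) hd2 hlam hlamS hYpos hYa' hIH.1 hIH.2
            rw [hright j k hj2 hk hjk1, hrk]
            exact hX
          · have hjkn : j + k ≤ n0 := by omega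
            have hIH1 := ih (k + 1) j (by omega) (by omega) (by omega) (by omega)
            have hIH2 := ih (k + 1) (j - 1) (by omega) (by omega) (by omega) (by omega)
            rw [hmid j k hj2 hk hjkn, hrk]
            have hd := hden k hk
            constructor
            · gcongr ?_ / _
              nlinarith [hIH1.1, hIH2.1]
            · rw [← mul_div_assoc]
              gcongr ?_ / _
              nlinarith [hIH1.2, hIH2.2, hYpos]
  have := key n0 1 i (by omega) hi (by omega) (by omega)
  exact this
end

section
/- Define f(n0) = n0·F(n, n0). Then for every positive integer n0, f(n0) − f(n0+1) = −(λs/λ)·Σ_{j=1}^{n0} Π_{k=1}^{j} 1/(k/n + 1); consequently the successive difference f(n0) − f(n0+1) is strictly decreasing as n0 increases, i.e., f(n0+1) − f(n0+2) < f(n0) − f(n0+1) for every positive integer n0. -/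
open Finset

/-- Closed-form stationary version age of a single node in a ring of `n0` gossiping nodes
(source rate `lamS`, per-node update rate `lam/n`, per-link rate `lam/2`). -/
noncomputable def ringNodeAge (lamS lam n : ℝ) (n0 : ℕ) : ℝ :=
  (lamS / lam) *
    ((∑ j ∈ Finset.Icc 1 (n0 - 1), ∏ k ∈ Finset.Icc 1 j, 1 / ((k : ℝ) / n + 1))
      + (n / (n0 : ℝ)) * ∏ k ∈ Finset.Icc 1 (n0 - 1), 1 / ((k : ℝ) / n + 1))

/-- Sum of version ages over the `n0` nodes of a ring. -/
noncomputable def ringSumAge (lamS lam n : ℝ) (n0 : ℕ) : ℝ :=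
  (n0 : ℝ) * ringNodeAge lamS lam n n0

noncomputable def ringP (n : ℝ) (j : ℕ) : ℝ := ∏ k ∈ Finset.Icc 1 j, 1 / ((k : ℝ) / n + 1)

lemma ringP_pos {n : ℝ} (hn : 0 < n) (j : ℕ) : 0 < ringP n j := by
  refine Finset.prod_pos fun k _ => ?_
  have : (0:ℝ) ≤ (k : ℝ) / n := by positivity
  positivity

lemma ringP_succ (n : ℝ) (j : ℕ) :
    ringP n (j + 1) = ringP n j * (1 / (((j:ℝ) + 1) / n + 1)) := by
  rw [ringP, Finset.prod_Icc_succ_top (by omega : 1 ≤ j + 1)]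
  push_cast
  rfl

lemma ringDiff {lamS lam n : ℝ} (hn : 0 < n) (hlam : lam ≠ 0) (m : ℕ) :
    ringSumAge lamS lam n (m + 1) - ringSumAge lamS lam n (m + 2)
      = -(lamS / lam) * ∑ j ∈ Finset.Icc 1 (m + 1), ringP n j := by
  have h1 : (m + 1) - 1 = m := by omega
  have h2 : (m + 2) - 1 = m + 1 := by omega
  have hsum : ∀ N : ℕ, ∑ j ∈ Finset.Icc 1 N, ∏ k ∈ Finset.Icc 1 j, 1 / ((k : ℝ) / n + 1)
      = ∑ j ∈ Finset.Icc 1 N, ringP n j := fun N => rfl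
  have hp : ∀ N : ℕ, (∏ k ∈ Finset.Icc 1 N, 1 / ((k : ℝ) / n + 1)) = ringP n N := fun N => rfl
  simp only [ringSumAge, ringNodeAge, h1, h2, hsum, hp]
  rw [Finset.sum_Icc_succ_top (by omega : 1 ≤ m + 1), ringP_succ]
  set S := ∑ j ∈ Finset.Icc 1 m, ringP n j with hS
  set Pm := ringP n m with hPm
  have hn' : n ≠ 0 := ne_of_gt hn
  have hm1 : ((m:ℝ) + 1) ≠ 0 := by positivity
  have hm2 : ((m:ℝ) + 2) ≠ 0 := by positivity
  have ha : ((m:ℝ) + 1) / n + 1 ≠ 0 := by positivity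
  push_cast
  field_simp
  ring

/-- With `f(n0) = n0·F(n,n0)` the sum of version ages of a ring of `n0` nodes, one has
`f(n0) - f(n0+1) = -(lamS/lam)·Σ_{j=1}^{n0} Π_{k=1}^{j} 1/(k/n+1)`; consequently the
successive difference `f(n0) - f(n0+1)` is strictly decreasing in `n0`. -/
theorem ringSumAge_successive_difference
    (lamS lam n : ℝ) (hlamS : 0 < lamS) (hlam : 0 < lam) (hn : 0 < n) :
    (∀ n0 : ℕ, 0 < n0 →
      ringSumAge lamS lam n n0 - ringSumAge lamS lam n (n0 + 1)
        = -(lamS / lam) * ∑ j ∈ Finset.Icc 1 n0, ∏ k ∈ Finset.Icc 1 j, 1 / ((k : ℝ) / n + 1)) ∧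
    (∀ n0 : ℕ, 0 < n0 →
      ringSumAge lamS lam n (n0 + 1) - ringSumAge lamS lam n (n0 + 2)
        < ringSumAge lamS lam n n0 - ringSumAge lamS lam n (n0 + 1)) := by
  have key : ∀ n0 : ℕ, 0 < n0 →
      ringSumAge lamS lam n n0 - ringSumAge lamS lam n (n0 + 1)
        = -(lamS / lam) * ∑ j ∈ Finset.Icc 1 n0, ringP n j := by
    intro n0 h
    obtain ⟨m, rfl⟩ := Nat.exists_eq_succ_of_ne_zero h.ne'
    exact ringDiff hn hlam.ne' m
  refine ⟨fun n0 h => key n0 h, fun n0 h => ?_⟩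
  rw [key n0 h, key (n0 + 1) (by omega)]
  have hc : 0 < lamS / lam := by positivity
  have hlt : ∑ j ∈ Finset.Icc 1 n0, ringP n j < ∑ j ∈ Finset.Icc 1 (n0 + 1), ringP n j := by
    rw [Finset.sum_Icc_succ_top (by omega : 1 ≤ n0 + 1)]
    have := ringP_pos hn (n0 + 1)
    linarith
  nlinarith
end

section
/- For all positive integers n and n0 with n0 ≤ n, Σ_{j=1}^{n0} Π_{k=1}^{j} 1/(1 + k/n) ≤ √(π·n). In particular Σ_{j=1}^{n0} Π_{k=1}^{j} 1/(1 + k/n) = O(√n). -/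
open Finset Real

lemma aux_factor_le (x : ℝ) (hx0 : 0 ≤ x) (hx1 : x ≤ 1) :
    1 / (1 + x) ≤ Real.exp (-(x / 2)) := by
  have h1 : 1 - x / 2 ≤ Real.exp (-(x / 2)) := by
    have := Real.add_one_le_exp (-(x / 2)); linarith
  have h2 : 1 / (1 + x) ≤ 1 - x / 2 := by
    rw [div_le_iff₀ (by linarith)]
    nlinarith
  linarith

lemma aux_prod_le (n j : ℕ) (hn : 0 < n) (hjn : j ≤ n) :
    ∏ k ∈ Finset.Icc 1 j, 1 / (1 + (k : ℝ) / (n : ℝ))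
      ≤ Real.exp (-(1 / (4 * n)) * (j : ℝ) ^ 2) := by
  have hnr : (0 : ℝ) < n := by exact_mod_cast hn
  calc ∏ k ∈ Finset.Icc 1 j, 1 / (1 + (k : ℝ) / (n : ℝ))
      ≤ ∏ k ∈ Finset.Icc 1 j, Real.exp (-((k : ℝ) / n / 2)) := by
        apply Finset.prod_le_prod
        · intro k _
          positivity
        · intro k hk
          rw [Finset.mem_Icc] at hk
          apply aux_factor_le
          · positivity
          · rw [div_le_one hnr]
            exact_mod_cast le_trans hk.2 hjn
    _ = Real.exp (∑ k ∈ Finset.Icc 1 j, -((k : ℝ) / n / 2)) := by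
        rw [Real.exp_sum]
    _ ≤ Real.exp (-(1 / (4 * n)) * (j : ℝ) ^ 2) := by
        apply Real.exp_le_exp.2
        have hS : (∑ k ∈ Finset.Icc 1 j, (k : ℝ)) = (j : ℝ) * (j + 1) / 2 := by
          induction j with
          | zero => simp
          | succ m ih =>
            rw [Finset.sum_Icc_succ_top (Nat.succ_le_succ (Nat.zero_le m)),
              ih (by omega)]
            push_cast
            ring
        have heq : ∑ k ∈ Finset.Icc 1 j, -((k : ℝ) / n / 2)
            = -((∑ k ∈ Finset.Icc 1 j, (k : ℝ)) / (n * 2)) := by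
          simp only [div_div]
          rw [Finset.sum_neg_distrib, Finset.sum_div]
        have hrhs : -(1 / (4 * (n : ℝ))) * (j : ℝ) ^ 2
            = -((j : ℝ) ^ 2 / (n * 2 * 2)) := by ring
        rw [heq, hS, hrhs, neg_le_neg_iff,
          div_le_div_iff₀ (by positivity) (by positivity)]
        have hj : (0 : ℝ) ≤ j := Nat.cast_nonneg j
        nlinarith

/-- For all positive integers `n0 ≤ n`,
`Σ_{j=1}^{n0} Π_{k=1}^{j} 1/(1 + k/n) ≤ √(π·n)`; in particular this sum is `O(√n)`. -/
theorem sum_product_le_sqrt_pi_n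
    (n n0 : ℕ) (hn : 0 < n) (hn0 : 0 < n0) (hn0n : n0 ≤ n) :
    ∑ j ∈ Finset.Icc 1 n0, ∏ k ∈ Finset.Icc 1 j, 1 / (1 + (k : ℝ) / (n : ℝ))
      ≤ Real.sqrt (Real.pi * n) := by
  have hnr : (0 : ℝ) < n := by exact_mod_cast hn
  set b : ℝ := 1 / (4 * n) with hbdef
  have hb : 0 < b := by positivity
  have step1 : ∑ j ∈ Finset.Icc 1 n0, ∏ k ∈ Finset.Icc 1 j, 1 / (1 + (k : ℝ) / (n : ℝ))
      ≤ ∑ j ∈ Finset.Icc 1 n0, Real.exp (-b * (j : ℝ) ^ 2) :=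
    Finset.sum_le_sum fun j hj =>
      aux_prod_le n j hn (le_trans (Finset.mem_Icc.1 hj).2 hn0n)
  have hanti : AntitoneOn (fun x : ℝ => Real.exp (-b * x ^ 2)) (Set.Icc 0 (0 + (n0 : ℝ))) := by
    intro s hs t ht hst
    apply Real.exp_le_exp.2
    have h2 : s ^ 2 ≤ t ^ 2 := by nlinarith [hs.1]
    nlinarith [mul_le_mul_of_nonneg_left h2 hb.le]
  have step3 := hanti.sum_le_integral
  have step2 : ∑ j ∈ Finset.Icc 1 n0, Real.exp (-b * (j : ℝ) ^ 2)
      = ∑ i ∈ Finset.range n0, Real.exp (-b * ((0 : ℝ) + ((i + 1 : ℕ) : ℝ)) ^ 2) := by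
    rw [← Finset.Ico_add_one_right_eq_Icc, Finset.sum_Ico_eq_sum_range]
    apply Finset.sum_congr (by norm_num)
    intro i _
    push_cast
    ring_nf
  have step4 : ∫ x in (0 : ℝ)..((0 : ℝ) + (n0 : ℝ)), Real.exp (-b * x ^ 2)
      ≤ ∫ x in Set.Ioi (0 : ℝ), Real.exp (-b * x ^ 2) := by
    rw [intervalIntegral.integral_of_le (by positivity)]
    apply MeasureTheory.setIntegral_mono_set (integrable_exp_neg_mul_sq hb).integrableOn
    · filter_upwards with x using Real.exp_nonneg _
    · exact (Set.Ioc_subset_Ioi_self).eventuallyLE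
  have step5 : ∫ x in Set.Ioi (0 : ℝ), Real.exp (-b * x ^ 2) = Real.sqrt (Real.pi * n) := by
    rw [integral_gaussian_Ioi]
    have hpb : Real.pi / b = Real.pi * n * 4 := by
      rw [hbdef]
      field_simp
    rw [hpb, Real.sqrt_mul (by positivity),
      show Real.sqrt 4 = 2 by
        rw [show (4 : ℝ) = 2 ^ 2 by norm_num, Real.sqrt_sq (by norm_num)]]
    ring
  calc ∑ j ∈ Finset.Icc 1 n0, ∏ k ∈ Finset.Icc 1 j, 1 / (1 + (k : ℝ) / (n : ℝ))
      ≤ ∑ j ∈ Finset.Icc 1 n0, Real.exp (-b * (j : ℝ) ^ 2) := step1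
    _ = ∑ i ∈ Finset.range n0, Real.exp (-b * ((0 : ℝ) + ((i + 1 : ℕ) : ℝ)) ^ 2) := step2
    _ ≤ ∫ x in (0 : ℝ)..((0 : ℝ) + (n0 : ℝ)), Real.exp (-b * x ^ 2) := step3
    _ ≤ ∫ x in Set.Ioi (0 : ℝ), Real.exp (-b * x ^ 2) := step4
    _ = Real.sqrt (Real.pi * n) := step5
end

section
/- There exists a real constant c > 0 such that for all integers n ≥ 4 and all positive integers n0 with n0 ≥ √n, one has Σ_{j=1}^{n0} Π_{k=1}^{j} 1/(1 + k/n) ≥ c·√n. In particular, if n0 = ω(√n), then Σ_{j=1}^{n0} Π_{k=1}^{j} 1/(1 + k/n) = Ω(√n). -/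
open Finset Real

/-- There is a constant `c > 0` such that for all integers `n ≥ 4` and all positive integers
`n0 ≥ √n`, `Σ_{j=1}^{n0} Π_{k=1}^{j} 1/(1 + k/n) ≥ c·√n`; in particular, if `n0 = ω(√n)`,
this sum is `Ω(√n)`. -/
theorem sum_product_ge_const_sqrt_n :
    ∃ c : ℝ, 0 < c ∧ ∀ n n0 : ℕ, 4 ≤ n → 0 < n0 → Real.sqrt n ≤ (n0 : ℝ) →
      c * Real.sqrt n
        ≤ ∑ j ∈ Finset.Icc 1 n0, ∏ k ∈ Finset.Icc 1 j, 1 / (1 + (k : ℝ) / (n : ℝ)) := by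
  refine ⟨1 / (2 * Real.exp 1), by positivity, fun n n0 hn hn0 hsqrt => ?_⟩
  set m := Nat.sqrt n with hm
  have hnpos : (0 : ℝ) < n := by positivity
  have hm2 : 2 ≤ m := by
    exact Nat.le_sqrt.2 (by omega)
  have hmljr : (m : ℝ) ≤ Real.sqrt n := Real.nat_sqrt_le_real_sqrt
  have hmub : Real.sqrt n < (m : ℝ) + 1 := by
    exact Real.real_sqrt_lt_nat_sqrt_succ
  have hmn0 : m ≤ n0 := by
    have : (m : ℝ) ≤ (n0 : ℝ) := le_trans hmljr hsqrt
    exact_mod_cast this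
  -- positivity of factors
  have hfac : ∀ j : ℕ, ∀ k ∈ Finset.Icc 1 j, (0 : ℝ) < 1 + (k : ℝ) / n := by
    intro j k _; positivity
  have hterm_pos : ∀ j : ℕ, (0 : ℝ) < ∏ k ∈ Finset.Icc 1 j, 1 / (1 + (k : ℝ) / n) := by
    intro j
    exact Finset.prod_pos fun k hk => by positivity
  -- each term with j ≤ m is ≥ (exp 1)⁻¹
  have hterm : ∀ j ∈ Finset.Icc 1 m,
      (Real.exp 1)⁻¹ ≤ ∏ k ∈ Finset.Icc 1 j, 1 / (1 + (k : ℝ) / n) := by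
    intro j hj
    rw [Finset.mem_Icc] at hj
    have hprod_le : ∏ k ∈ Finset.Icc 1 j, (1 + (k : ℝ) / n) ≤ Real.exp 1 := by
      calc ∏ k ∈ Finset.Icc 1 j, (1 + (k : ℝ) / n)
          ≤ ∏ k ∈ Finset.Icc 1 j, Real.exp ((k : ℝ) / n) := by
            refine Finset.prod_le_prod (fun k hk => by positivity) (fun k hk => ?_)
            have := Real.add_one_le_exp ((k : ℝ) / n)
            linarith
        _ = Real.exp (∑ k ∈ Finset.Icc 1 j, (k : ℝ) / n) := (Real.exp_sum _ _).symm
        _ ≤ Real.exp 1 := by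
            apply Real.exp_le_exp.2
            have hcard : (Finset.Icc 1 j).card = j := by rw [Nat.card_Icc]; simp
            have hsum : ∑ k ∈ Finset.Icc 1 j, (k : ℝ) / n ≤ j • ((j : ℝ) / n) := by
              have h := Finset.sum_le_card_nsmul (Finset.Icc 1 j)
                (fun k => (k : ℝ) / n) ((j : ℝ) / n) (fun k hk => by
                  rw [Finset.mem_Icc] at hk
                  have : (k : ℝ) ≤ (j : ℝ) := by exact_mod_cast hk.2
                  exact div_le_div_of_nonneg_right this hnpos.le)
              rwa [hcard] at h
            have hjj : (j : ℝ) * j ≤ n := by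
              have h1 : j * j ≤ m * m := Nat.mul_le_mul hj.2 hj.2
              have h2 : m * m ≤ n := by simpa [pow_two] using Nat.sqrt_le' n
              exact_mod_cast le_trans h1 h2
            calc ∑ k ∈ Finset.Icc 1 j, (k : ℝ) / n ≤ j • ((j : ℝ) / n) := hsum
              _ = (j : ℝ) * j / n := by rw [nsmul_eq_mul]; ring
              _ ≤ 1 := by rw [div_le_one hnpos]; exact hjj
    have hppos : (0 : ℝ) < ∏ k ∈ Finset.Icc 1 j, (1 + (k : ℝ) / n) :=
      Finset.prod_pos (hfac j)
    calc (Real.exp 1)⁻¹ ≤ (∏ k ∈ Finset.Icc 1 j, (1 + (k : ℝ) / n))⁻¹ :=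
          inv_anti₀ hppos hprod_le
      _ = ∏ k ∈ Finset.Icc 1 j, 1 / (1 + (k : ℝ) / n) := by
          rw [← Finset.prod_inv_distrib]; simp
  -- lower bound the sum
  have hsub : Finset.Icc 1 m ⊆ Finset.Icc 1 n0 := Finset.Icc_subset_Icc_right hmn0
  have hsum1 : ∑ j ∈ Finset.Icc 1 m, ∏ k ∈ Finset.Icc 1 j, 1 / (1 + (k : ℝ) / n)
      ≤ ∑ j ∈ Finset.Icc 1 n0, ∏ k ∈ Finset.Icc 1 j, 1 / (1 + (k : ℝ) / n) :=
    Finset.sum_le_sum_of_subset_of_nonneg hsub (fun j _ _ => (hterm_pos j).le)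
  have hsum2 : (m : ℝ) * (Real.exp 1)⁻¹
      ≤ ∑ j ∈ Finset.Icc 1 m, ∏ k ∈ Finset.Icc 1 j, 1 / (1 + (k : ℝ) / n) := by
    have := Finset.card_nsmul_le_sum (Finset.Icc 1 m) _ _ hterm
    rwa [Nat.card_Icc, nsmul_eq_mul, Nat.add_sub_cancel] at this
  have hfinal : 1 / (2 * Real.exp 1) * Real.sqrt n ≤ (m : ℝ) * (Real.exp 1)⁻¹ := by
    have h2m : Real.sqrt n ≤ 2 * m := by
      have : (1 : ℝ) ≤ m := by exact_mod_cast le_trans (by norm_num) hm2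
      linarith
    have hepos : (0 : ℝ) < Real.exp 1 := Real.exp_pos 1
    rw [div_mul_eq_mul_div, one_mul, div_le_iff₀ (by positivity)]
    calc Real.sqrt n ≤ 2 * m := h2m
      _ = (m : ℝ) * (Real.exp 1)⁻¹ * (2 * Real.exp 1) := by
          field_simp
    
  linarith
end
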